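/- Let R be a commutative ring, σ a finite index type, and for n : σ →₀ ℕ let D_n be the divided-power operator on MvPolynomial σ R. Then the generalized Leibniz rule holds: for all f, g ∈ MvPolynomial σ R and all n, D_n(f * g) = Σ_{l ≤ n} D_l(f) * D_{n−l}(g), the sum being over all l : σ →₀ ℕ with l ≤ n componentwise. -/

import Mathlib

/-- The divided-power operator `D_n` on `MvPolynomial σ R`, determined on monomials by
`D_n (X ^ m) = (∏ i, Nat.choose (m i) (n i)) • X ^ (m - n)` (componentwise truncated
subtraction). -/
noncomputable def dpOp (R : Type*) [CommRing R] (σ : Type*) [Fintype σ] (n : σ →₀ ℕ) :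
    MvPolynomial σ R →ₗ[R] MvPolynomial σ R :=
  Finsupp.lsum ℕ (fun m : σ →₀ ℕ =>
    (∏ i, Nat.choose (m i) (n i)) • (MvPolynomial.monomial (m - n) : R →ₗ[R] MvPolynomial σ R))
    ∘ₗ (AddMonoidAlgebra.coeffLinearEquiv R).toLinearMap

lemma dpOp_monomial (R : Type*) [CommRing R] (σ : Type*) [Fintype σ] (n m : σ →₀ ℕ) (r : R) :
    dpOp R σ n (MvPolynomial.monomial m r)
      = (∏ i, Nat.choose (m i) (n i)) • MvPolynomial.monomial (m - n) r := by
  rw [dpOp, LinearMap.comp_apply]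
  have hc : (AddMonoidAlgebra.coeffLinearEquiv R).toLinearMap (MvPolynomial.monomial m r)
      = Finsupp.single m r := by
    rfl
  rw [hc]
  erw [Finsupp.lsum_single]
  simp [MvPolynomial.single_eq_monomial]

lemma keyA {σ : Type*} [Fintype σ] [DecidableEq σ] (m m' n : σ →₀ ℕ) :
    ∑ l ∈ Finset.Iic n, ∏ i, Nat.choose (m i) (l i) * Nat.choose (m' i) ((n - l) i)
      = ∏ i, Nat.choose (m i + m' i) (n i) := by
  classical
  have h : ∀ i : σ, Nat.choose (m i + m' i) (n i)
      = ∑ j ∈ Finset.Iic (n i), Nat.choose (m i) j * Nat.choose (m' i) (n i - j) := by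
    intro i
    have hr : Finset.Iic (n i) = Finset.range ((n i).succ) := by
      ext x; simp [Nat.lt_succ_iff]
    rw [Nat.add_choose_eq,
      Finset.Nat.sum_antidiagonal_eq_sum_range_succ
        (fun a b => Nat.choose (m i) a * Nat.choose (m' i) b), hr]
  simp_rw [h]
  rw [Finset.prod_univ_sum]
  refine Finset.sum_equiv (Finsupp.equivFunOnFinite) ?_ ?_
  · intro l
    simp [Fintype.mem_piFinset, Finsupp.le_def]
  · intro l hl
    refine Finset.prod_congr rfl fun i _ => ?_
    simp [Finsupp.tsub_apply]

/-- Generalized Leibniz rule: `D_n (f * g) = ∑_(l ≤ n) D_l f * D_(n-l) g`. -/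
theorem dpOp_leibniz (R : Type*) [CommRing R] (σ : Type*) [Fintype σ] [DecidableEq σ]
    (f g : MvPolynomial σ R) (n : σ →₀ ℕ) :
    dpOp R σ n (f * g) = ∑ l ∈ Finset.Iic n, dpOp R σ l f * dpOp R σ (n - l) g := by
  induction f using MvPolynomial.induction_on' with
  | add p q hp hq =>
    simp only [add_mul, map_add, hp, hq, ← Finset.sum_add_distrib]
  | monomial m r =>
    induction g using MvPolynomial.induction_on' with
    | add p q hp hq =>
      simp only [mul_add, map_add, hp, hq, mul_add, ← Finset.sum_add_distrib]
    | monomial m' s =>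
      rw [MvPolynomial.monomial_mul, dpOp_monomial]
      have hterm : ∀ l ∈ Finset.Iic n,
          dpOp R σ l (MvPolynomial.monomial m r) * dpOp R σ (n - l) (MvPolynomial.monomial m' s)
            = (∏ i, Nat.choose (m i) (l i) * Nat.choose (m' i) ((n - l) i)) •
                MvPolynomial.monomial (m + m' - n) (r * s) := by
        intro l hl
        rw [Finset.mem_Iic] at hl
        rw [dpOp_monomial, dpOp_monomial, smul_mul_smul_comm, MvPolynomial.monomial_mul,
          ← Finset.prod_mul_distrib]
        by_cases hc : l ≤ m ∧ n - l ≤ m'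
        · have he : m - l + (m' - (n - l)) = m + m' - n := by
            ext i
            have h1 := Finsupp.le_def.mp hl i
            have h2 := Finsupp.le_def.mp hc.1 i
            have h3 := Finsupp.le_def.mp hc.2 i
            simp only [Finsupp.tsub_apply, Finsupp.add_apply] at *
            omega
          rw [he]
        · have : (∏ i, Nat.choose (m i) (l i) * Nat.choose (m' i) ((n - l) i)) = 0 := by
            rw [not_and_or] at hc
            rcases hc with hc | hc
            · rw [Finsupp.le_def, not_forall] at hc
              obtain ⟨i, hi⟩ := hc
              exact Finset.prod_eq_zero (Finset.mem_univ i)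
                (by rw [Nat.choose_eq_zero_of_lt (Nat.lt_of_not_le hi)]; ring)
            · rw [Finsupp.le_def, not_forall] at hc
              obtain ⟨i, hi⟩ := hc
              exact Finset.prod_eq_zero (Finset.mem_univ i)
                (by rw [Nat.choose_eq_zero_of_lt (Nat.lt_of_not_le hi)]; ring)
          rw [this, zero_smul, zero_smul]
      rw [Finset.sum_congr rfl hterm, ← Finset.sum_smul, keyA]
      simp
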